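/- Let p, q, q₁, …, q_T be probability densities on ℝ^d with q_t = f_t # q_{t−1} (q₀ = q), where each f_t is a diffeomorphism. Suppose sup_t ∫ | |det J_{f_t}(z)| p(f_t(z)) − p(z) | dz ≤ L. Then ‖p − q_T‖₁ ≥ ‖p − q‖₁ − T·L. In particular, if ‖p − q_T‖₁ ≤ ε then T ≥ (‖p − q‖₁ − ε)/L. -/

import Mathlib

open MeasureTheory

/-- Telescoping lower bound on flow depth: if each layer can decrease the L¹
distance to `p` by at most `L`, then after `T` layers
`‖p − q_T‖₁ ≥ ‖p − q₀‖₁ − T·L`; in particular `‖p − q_T‖₁ ≤ ε` forces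
`T ≥ (‖p − q₀‖₁ − ε)/L`. -/
theorem depth_lower_bound {d : ℕ} (T : ℕ) (L ε : ℝ) (hL : 0 < L)
    (f : ℕ → EuclideanSpace ℝ (Fin d) → EuclideanSpace ℝ (Fin d))
    (hfd : ∀ t, Differentiable ℝ (f t)) (hfb : ∀ t, Function.Bijective (f t))
    (hJ : ∀ t z, (fderiv ℝ (f t) z).det ≠ 0)
    (q : ℕ → EuclideanSpace ℝ (Fin d) → ℝ) (p : EuclideanSpace ℝ (Fin d) → ℝ)
    (hp0 : ∀ z, 0 ≤ p z) (hq0 : ∀ t z, 0 ≤ q t z)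
    (hp1 : ∫ z, p z = 1) (hq1 : ∀ t, ∫ z, q t z = 1)
    (hpush : ∀ t z, q (t + 1) (f (t + 1) z) * |(fderiv ℝ (f (t + 1)) z).det| = q t z)
    (hint : ∀ t, Integrable (fun z => |p z - q t z|))
    (hintJ : ∀ t, Integrable (fun z => |(|(fderiv ℝ (f t) z).det| * p (f t z)) - p z|))
    (hstep : ∀ t, (∫ z, |(|(fderiv ℝ (f t) z).det| * p (f t z)) - p z|) ≤ L) :
    (∫ z, |p z - q 0 z|) - T * L ≤ (∫ z, |p z - q T z|) ∧
      ((∫ z, |p z - q T z|) ≤ ε → ((∫ z, |p z - q 0 z|) - ε) / L ≤ T) := by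
  -- change of variables setup for each layer
  have hCOV : ∀ t, (∫ z, |p z - q (t+1) z|) =
      ∫ z, |(fderiv ℝ (f (t+1)) z).det| * |p (f (t+1) z) - q (t+1) (f (t+1) z)| := by
    intro t
    have hder : ∀ x ∈ (Set.univ : Set (EuclideanSpace ℝ (Fin d))),
        HasFDerivWithinAt (f (t+1)) (fderiv ℝ (f (t+1)) x) Set.univ x :=
      fun x _ => ((hfd (t+1) x).hasFDerivAt).hasFDerivWithinAt
    have himg : f (t+1) '' Set.univ = Set.univ := by
      rw [Set.image_univ]; exact (hfb (t+1)).2.range_eq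
    have := MeasureTheory.integral_image_eq_integral_abs_det_fderiv_smul
      (volume : Measure (EuclideanSpace ℝ (Fin d))) MeasurableSet.univ hder
      (hfb (t+1)).1.injOn (fun z => |p z - q (t+1) z|)
    rw [himg] at this
    simpa [smul_eq_mul] using this
  have hCOVint : ∀ t, Integrable (fun z =>
      |(fderiv ℝ (f (t+1)) z).det| * |p (f (t+1) z) - q (t+1) (f (t+1) z)|) := by
    intro t
    have hder : ∀ x ∈ (Set.univ : Set (EuclideanSpace ℝ (Fin d))),
        HasFDerivWithinAt (f (t+1)) (fderiv ℝ (f (t+1)) x) Set.univ x :=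
      fun x _ => ((hfd (t+1) x).hasFDerivAt).hasFDerivWithinAt
    have himg : f (t+1) '' Set.univ = Set.univ := by
      rw [Set.image_univ]; exact (hfb (t+1)).2.range_eq
    have := (MeasureTheory.integrableOn_image_iff_integrableOn_abs_det_fderiv_smul
      (volume : Measure (EuclideanSpace ℝ (Fin d))) MeasurableSet.univ hder
      (hfb (t+1)).1.injOn (fun z => |p z - q (t+1) z|)).mp
      (by rw [himg]; simpa [IntegrableOn] using hint (t+1))
    simpa [IntegrableOn, smul_eq_mul] using this
  -- single-step bound
  have hstep' : ∀ t, (∫ z, |p z - q t z|) ≤ L + ∫ z, |p z - q (t+1) z| := by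
    intro t
    have hpt : ∀ z, |p z - q t z| ≤
        |(|(fderiv ℝ (f (t+1)) z).det| * p (f (t+1) z)) - p z| +
          |(fderiv ℝ (f (t+1)) z).det| * |p (f (t+1) z) - q (t+1) (f (t+1) z)| := by
      intro z
      have h1 : p z - q t z =
          -((|(fderiv ℝ (f (t+1)) z).det| * p (f (t+1) z)) - p z) +
            ((|(fderiv ℝ (f (t+1)) z).det| * p (f (t+1) z)) - q t z) := by ring
      calc |p z - q t z| ≤ |(|(fderiv ℝ (f (t+1)) z).det| * p (f (t+1) z)) - p z| +
            |(|(fderiv ℝ (f (t+1)) z).det| * p (f (t+1) z)) - q t z| := by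
              rw [h1]; exact le_trans (abs_add_le _ _) (by rw [abs_neg])
        _ = _ := by
              congr 1
              rw [← hpush t z]
              rw [← abs_mul]
              have : |(fderiv ℝ (f (t+1)) z).det| * p (f (t+1) z) -
                  q (t+1) (f (t+1) z) * |(fderiv ℝ (f (t+1)) z).det| =
                  |(fderiv ℝ (f (t+1)) z).det| * (p (f (t+1) z) - q (t+1) (f (t+1) z)) := by
                ring
              rw [this, abs_mul, abs_abs]
              rw [abs_mul]
    calc (∫ z, |p z - q t z|)
        ≤ ∫ z, (|(|(fderiv ℝ (f (t+1)) z).det| * p (f (t+1) z)) - p z| +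
            |(fderiv ℝ (f (t+1)) z).det| * |p (f (t+1) z) - q (t+1) (f (t+1) z)|) :=
          integral_mono (hint t) ((hintJ (t+1)).add (hCOVint t)) hpt
      _ = (∫ z, |(|(fderiv ℝ (f (t+1)) z).det| * p (f (t+1) z)) - p z|) +
            ∫ z, |(fderiv ℝ (f (t+1)) z).det| * |p (f (t+1) z) - q (t+1) (f (t+1) z)| :=
          integral_add (hintJ (t+1)) (hCOVint t)
      _ ≤ L + ∫ z, |p z - q (t+1) z| := by
          rw [← hCOV t]; exact add_le_add_left (hstep (t+1)) _
  have main : (∫ z, |p z - q 0 z|) - T * L ≤ ∫ z, |p z - q T z| := by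
    induction T with
    | zero => simp
    | succ n ih =>
      have := hstep' n
      push_cast
      nlinarith [ih, hstep' n]
  refine ⟨main, fun hε => ?_⟩
  rw [div_le_iff₀ hL]
  nlinarith [main, hε]
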